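/- Let R be a ring, let N and M be ℤ-indexed chain complexes of R-modules, let (f, g, φ) be a contraction from N to M, and let δ be a perturbation of N that is pointwise nilpotent with respect to φ. Define Σx = Σ_{i≥0} (−1)^i (φδ)^i x and ∂_δ = f ∘ δ ∘ Σ ∘ g. Then (∂_M + ∂_δ) ∘ (∂_M + ∂_δ) = 0, i.e. the perturbed operator ∂_M + ∂_δ is a differential on the underlying graded module of M. -/
import Mathlib

private lemma aux_key1 {R N : Type} [Ring R] [AddCommGroup N] [Module R N]
    (φ δ S : N →ₗ[R] N)
    (δ_nil : ∀ x : N, ∃ m : ℕ, ((φ ∘ₗ δ) ^ m) x = 0)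
    (hS : ∀ (x : N) (m : ℕ), ((φ ∘ₗ δ) ^ m) x = 0 →
      S x = ∑ i ∈ Finset.range m, ((-1 : ℤ) ^ i) • (((φ ∘ₗ δ) ^ i) x))
    (x : N) : S x + φ (δ (S x)) = x := by
  obtain ⟨m, hm⟩ := δ_nil x
  have hφδ : φ (δ (S x)) = (φ ∘ₗ δ) (S x) := rfl
  rw [hφδ, hS x m hm, map_sum, ← Finset.sum_add_distrib]
  have hterm : ∀ i ∈ Finset.range m,
      ((-1:ℤ)^i • (((φ ∘ₗ δ)^i) x) + (φ ∘ₗ δ) ((-1:ℤ)^i • (((φ ∘ₗ δ)^i) x)))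
        = (fun j => (-1:ℤ)^j • (((φ ∘ₗ δ)^j) x)) i
          - (fun j => (-1:ℤ)^j • (((φ ∘ₗ δ)^j) x)) (i+1) := by
    intro i _
    simp only []
    rw [map_zsmul]
    have hp : (φ ∘ₗ δ) (((φ ∘ₗ δ)^i) x) = ((φ ∘ₗ δ)^(i+1)) x := by
      rw [pow_succ']; rfl
    rw [hp]
    have hsgn : ((-1:ℤ)^(i+1)) = -((-1:ℤ)^i) := by ring
    rw [hsgn, neg_smul, sub_neg_eq_add]
  rw [Finset.sum_congr rfl hterm, Finset.sum_range_sub']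
  simp [hm]

private lemma aux_key0 {R N : Type} [Ring R] [AddCommGroup N] [Module R N]
    (φ δ S : N →ₗ[R] N)
    (δ_nil : ∀ x : N, ∃ m : ℕ, ((φ ∘ₗ δ) ^ m) x = 0)
    (hS : ∀ (x : N) (m : ℕ), ((φ ∘ₗ δ) ^ m) x = 0 →
      S x = ∑ i ∈ Finset.range m, ((-1 : ℤ) ^ i) • (((φ ∘ₗ δ) ^ i) x))
    (x : N) : S (φ (δ x)) = φ (δ (S x)) := by
  obtain ⟨m, hm⟩ := δ_nil x
  have hm' : ((φ ∘ₗ δ)^m) ((φ ∘ₗ δ) x) = 0 := by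
    rw [← Module.End.mul_apply, ← pow_succ, pow_succ', Module.End.mul_apply, hm, map_zero]
  have e1 : S (φ (δ x)) = S ((φ ∘ₗ δ) x) := rfl
  have e2 : φ (δ (S x)) = (φ ∘ₗ δ) (S x) := rfl
  rw [e1, e2, hS _ m hm', hS x m hm, map_sum]
  refine Finset.sum_congr rfl fun i _ => ?_
  rw [map_zsmul, ← Module.End.mul_apply, ← Module.End.mul_apply, ← pow_succ, ← pow_succ']

private lemma aux_keyP4 {R N : Type} [Ring R] [AddCommGroup N] [Module R N]
    (φ δ S : N →ₗ[R] N)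
    (δ_nil : ∀ x : N, ∃ m : ℕ, ((φ ∘ₗ δ) ^ m) x = 0)
    (hS : ∀ (x : N) (m : ℕ), ((φ ∘ₗ δ) ^ m) x = 0 →
      S x = ∑ i ∈ Finset.range m, ((-1 : ℤ) ^ i) • (((φ ∘ₗ δ) ^ i) x))
    (v : N) : δ (S v) = δ v - δ (S (φ (δ v))) := by
  have h0 := aux_key0 φ δ S δ_nil hS v
  have h1 : S v = v - φ (δ (S v)) := eq_sub_of_add_eq (aux_key1 φ δ S δ_nil hS v)
  rw [← h0] at h1
  rw [h1, map_sub]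

/-- A contraction between ℤ-graded chain complexes of `R`-modules, presented via total
modules `N` and `M` with internal ℤ-gradings `𝒩`, `ℳ`, differentials `dN`, `dM` of
degree `-1` squaring to zero, chain maps `f : N → M`, `g : M → N` of degree `0`, and a
homotopy operator `φ : N → N` of degree `+1`, satisfying
`f ∘ g = id`, `g ∘ f + φ ∘ dN + dN ∘ φ = id`, `f ∘ φ = 0`, `φ ∘ g = 0`, `φ ∘ φ = 0`. -/
structure Contraction (R : Type) [Ring R]
    (N : Type) [AddCommGroup N] [Module R N]
    (M : Type) [AddCommGroup M] [Module R M]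
    (𝒩 : ℤ → Submodule R N) (ℳ : ℤ → Submodule R M)
    (dN : N →ₗ[R] N) (dM : M →ₗ[R] M)
    (f : N →ₗ[R] M) (g : M →ₗ[R] N) (φ : N →ₗ[R] N) : Prop where
  gradedN : DirectSum.IsInternal 𝒩
  gradedM : DirectSum.IsInternal ℳ
  dN_deg : ∀ i : ℤ, ∀ x ∈ 𝒩 i, dN x ∈ 𝒩 (i - 1)
  dM_deg : ∀ i : ℤ, ∀ x ∈ ℳ i, dM x ∈ ℳ (i - 1)
  dN_sq : dN ∘ₗ dN = 0
  dM_sq : dM ∘ₗ dM = 0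
  f_deg : ∀ i : ℤ, ∀ x ∈ 𝒩 i, f x ∈ ℳ i
  g_deg : ∀ i : ℤ, ∀ x ∈ ℳ i, g x ∈ 𝒩 i
  φ_deg : ∀ i : ℤ, ∀ x ∈ 𝒩 i, φ x ∈ 𝒩 (i + 1)
  f_chain : dM ∘ₗ f = f ∘ₗ dN
  g_chain : dN ∘ₗ g = g ∘ₗ dM
  fg : f ∘ₗ g = LinearMap.id
  homotopy : g ∘ₗ f + φ ∘ₗ dN + dN ∘ₗ φ = LinearMap.id
  fφ : f ∘ₗ φ = 0
  φg : φ ∘ₗ g = 0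
  φφ : φ ∘ₗ φ = 0

/-- The perturbed operator `dM + f ∘ δ ∘ S ∘ g` on `M` squares to zero. -/
theorem perturbed_differential_squares_to_zero
    (R : Type) [Ring R]
    (N : Type) [AddCommGroup N] [Module R N]
    (M : Type) [AddCommGroup M] [Module R M]
    (𝒩 : ℤ → Submodule R N) (ℳ : ℤ → Submodule R M)
    (dN : N →ₗ[R] N) (dM : M →ₗ[R] M)
    (f : N →ₗ[R] M) (g : M →ₗ[R] N) (φ : N →ₗ[R] N)
    (hc : Contraction R N M 𝒩 ℳ dN dM f g φ)
    (δ : N →ₗ[R] N)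
    (δ_deg : ∀ i : ℤ, ∀ x ∈ 𝒩 i, δ x ∈ 𝒩 (i - 1))
    (δ_pert : (dN + δ) ∘ₗ (dN + δ) = 0)
    (δ_nil : ∀ x : N, ∃ m : ℕ, ((φ ∘ₗ δ) ^ m) x = 0)
    (S : N →ₗ[R] N)
    (hS : ∀ (x : N) (m : ℕ), ((φ ∘ₗ δ) ^ m) x = 0 →
      S x = ∑ i ∈ Finset.range m, ((-1 : ℤ) ^ i) • (((φ ∘ₗ δ) ^ i) x)) :
    (dM + f ∘ₗ δ ∘ₗ S ∘ₗ g) ∘ₗ (dM + f ∘ₗ δ ∘ₗ S ∘ₗ g) = 0 := by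
  apply LinearMap.ext
  intro y
  simp only [LinearMap.comp_apply, LinearMap.add_apply, LinearMap.zero_apply]
  have hdM2 : ∀ z : M, dM (dM z) = 0 := fun z => by
    simpa using LinearMap.congr_fun hc.dM_sq z
  have hdN2 : ∀ z : N, dN (dN z) = 0 := fun z => by
    simpa using LinearMap.congr_fun hc.dN_sq z
  have hfc : ∀ z : N, dM (f z) = f (dN z) := fun z => by
    simpa using LinearMap.congr_fun hc.f_chain z
  have hgc : ∀ z : M, g (dM z) = dN (g z) := fun z => by
    simpa using (LinearMap.congr_fun hc.g_chain z).symm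
  have hhom : ∀ z : N, g (f z) = z - dN (φ z) - φ (dN z) := fun z => by
    have h := LinearMap.congr_fun hc.homotopy z
    simp only [LinearMap.add_apply, LinearMap.comp_apply, LinearMap.id_apply] at h
    exact eq_sub_of_add_eq (eq_sub_of_add_eq h)
  have hδδ : ∀ z : N, δ (δ z) = -(dN (δ z)) - δ (dN z) := fun z => by
    have h := LinearMap.congr_fun δ_pert z
    simp only [LinearMap.comp_apply, LinearMap.add_apply, LinearMap.zero_apply,
      map_add] at h
    rw [hdN2] at h
    have h2 : δ (δ z) - (-(dN (δ z)) - δ (dN z)) = 0 := by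
      rw [← h]; abel
    exact sub_eq_zero.mp h2
  have key : ∀ x : N,
      dN (δ (S x)) + δ (S (dN x + (δ (S x) - dN (φ (δ (S x))) - φ (dN (δ (S x)))))) = 0 := by
    intro x
    have h1 : φ (δ (S x)) = x - S x := eq_sub_of_add_eq' (aux_key1 φ δ S δ_nil hS x)
    have h3 : δ (S (δ (S x))) = δ (δ (S x)) - δ (S (φ (δ (δ (S x))))) :=
      aux_keyP4 φ δ S δ_nil hS (δ (S x))
    have h4 : δ (S (dN (S x))) = δ (dN (S x)) - δ (S (φ (δ (dN (S x))))) :=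
      aux_keyP4 φ δ S δ_nil hS (dN (S x))
    rw [hδδ (S x)] at h3
    simp only [map_add, map_sub, map_neg] at h3 ⊢
    rw [h1]
    simp only [map_sub]
    rw [h3, h4]
    abel
  rw [map_add dM, hdM2, zero_add, hfc, map_add g, hgc, hhom, ← map_add f, key (g y),
    map_zero]
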